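/- Let c := (4ε/10 + 1/δ₁)/(δ₂ - 4ε/10) where ε > 0 is small enough that 4ε/10 < δ₂. Let γ, γ' ∈ Γ with γ_j ≤ γ'_j. Suppose β ∈ W_{γ,0} \ U_γ^j with β_j < γ_j, and β' ∈ W_{γ',0}, and |β_j - β'_j| ≤ (4ε/10)(d_Γ(β) + d_Γ(β')). Then d_Γ(β) ≤ c·d_Γ(β'). -/
import Mathlib


open Metric

lemma coord_le_norm (x : EuclideanSpace ℝ (Fin 3)) (j : Fin 3) : |x j| ≤ ‖x‖ := by
  rw [EuclideanSpace.norm_eq, ← Real.sqrt_sq_eq_abs]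
  apply Real.sqrt_le_sqrt
  calc x j ^ 2 = ‖x j‖ ^ 2 := by rw [Real.norm_eq_abs, sq_abs]
  _ ≤ ∑ i, ‖x i‖ ^ 2 :=
      Finset.single_le_sum (f := fun i => ‖x i‖ ^ 2) (fun i _ => sq_nonneg _) (Finset.mem_univ j)

/-- Lacunary scale bound: if `β ∈ W_{γ,0} \ U_γ^j` with `β_j < γ_j`, `β' ∈ W_{γ',0}`,
`γ_j ≤ γ'_j` and the frequency intervals overlap, then `d_Γ(β) ≤ c·d_Γ(β')` with
`c = (4ε/10 + 1/δ₁)/(δ₂ - 4ε/10)`. -/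
theorem lacunary_scale_bound (θ₀ : ℝ) (hθ0 : 0 ≤ θ₀) (hθ6 : θ₀ < Real.pi / 6)
    (j₀ : Fin 3) (Γ : Set (EuclideanSpace ℝ (Fin 3)))
    (hΓV : Γ ⊆ {ξ : EuclideanSpace ℝ (Fin 3) | ξ 0 + ξ 1 + ξ 2 = 0})
    (hclosed : IsClosed Γ)
    (hcone : ∀ γ ∈ Γ, ∀ γ' ∈ Γ, γ ≠ γ' →
      Real.sqrt 6 / 3 * ‖γ - γ'‖ * Real.cos θ₀ < |(γ - γ') j₀|)
    (θ₁ δ₁ δ₂ : ℝ)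
    (hθ₁ : θ₁ = Real.pi / 18 - θ₀ / 3)
    (hδ₁ : δ₁ = Real.sin θ₁)
    (hδ₂ : δ₂ = Real.sqrt 6 / 3 * Real.cos (Real.pi / 3 + θ₀ + θ₁))
    (ε c : ℝ) (hε : 0 < ε) (hεδ : 4 * ε / 10 < δ₂)
    (hc : c = (4 * ε / 10 + 1 / δ₁) / (δ₂ - 4 * ε / 10))
    (γ γ' : EuclideanSpace ℝ (Fin 3)) (hγ : γ ∈ Γ) (hγ' : γ' ∈ Γ)
    (j : Fin 3) (horder : γ j ≤ γ' j)
    (β β' : EuclideanSpace ℝ (Fin 3))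
    (hβV : β ∈ {ξ : EuclideanSpace ℝ (Fin 3) | ξ 0 + ξ 1 + ξ 2 = 0})
    (hβ'V : β' ∈ {ξ : EuclideanSpace ℝ (Fin 3) | ξ 0 + ξ 1 + ξ 2 = 0})
    (hβW : ‖β - γ‖ ≤ (1 / δ₁) * infDist β Γ)
    (hβU : ¬ |β j - γ j| ≤ δ₂ * ‖β - γ‖)
    (hβj : β j < γ j)
    (hβ'W : ‖β' - γ'‖ ≤ (1 / δ₁) * infDist β' Γ)
    (hoverlap : |β j - β' j| ≤ 4 * ε / 10 * (infDist β Γ + infDist β' Γ)) :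
    infDist β Γ ≤ c * infDist β' Γ := by
  set a := infDist β Γ with ha'
  set b := infDist β' Γ with hb'
  have ha : 0 ≤ a := infDist_nonneg
  have hb : 0 ≤ b := infDist_nonneg
  have haγ : a ≤ ‖β - γ‖ := by
    rw [ha', ← dist_eq_norm]; exact infDist_le_dist_of_mem hγ
  have hεpos : 0 < 4 * ε / 10 := by linarith
  have hδ2pos : 0 < δ₂ := lt_trans hεpos hεδ
  have h1 : δ₂ * a ≤ |β j - γ j| :=
    le_of_lt (lt_of_le_of_lt (mul_le_mul_of_nonneg_left haγ hδ2pos.le) (lt_of_not_ge hβU))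
  have h2 : |β j - γ j| ≤ γ' j - β j := by
    rw [abs_of_nonpos (by linarith)]; linarith
  have h3 : γ' j - β' j ≤ |β' j - γ' j| := by
    rw [abs_sub_comm]; exact le_abs_self _
  have h4 : |β' j - γ' j| ≤ ‖β' - γ'‖ := by
    have := coord_le_norm (β' - γ') j
    simpa using this
  have h5 : β' j - β j ≤ |β j - β' j| := by
    rw [abs_sub_comm]; exact le_abs_self _
  have key : δ₂ * a ≤ 4 * ε / 10 * (a + b) + (1 / δ₁) * b := by
    have : γ' j - β j = (γ' j - β' j) + (β' j - β j) := by ring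
    nlinarith [hβ'W, hoverlap]
  rw [hc, div_mul_eq_mul_div, le_div_iff₀ (by linarith : (0:ℝ) < δ₂ - 4 * ε / 10)]
  nlinarith
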